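/- Let n ≥ 1. For every symplectic real-linear map A : ℍⁿ → ℍⁿ and every unit quaternion q (‖q‖ = 1), the Kraines 4-form Ω = Ω_𝐢∧Ω_𝐢 + Ω_𝐣∧Ω_𝐣 + Ω_𝐤∧Ω_𝐤 is invariant under the map T(u) = (A u)·q: for all u₁, u₂, u₃, u₄ ∈ ℍⁿ, Ω(T u₁, T u₂, T u₃, T u₄) = Ω(u₁, u₂, u₃, u₄). (The Kraines form is invariant under the natural action of Sp(n).Sp(1) on ℍⁿ.) -/

import Mathlib

open scoped Quaternion TensorProduct

noncomputable section

abbrev Hn (n : ℕ) := Fin n → ℍ[ℝ]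

/-- The quaternionic "symplectic product" `(u,v) = ∑ i, uᵢ * conj vᵢ`. -/
def sympProd {n : ℕ} (u v : Hn n) : ℍ[ℝ] := ∑ i, u i * star (v i)

/-- The real inner product `⟨u,v⟩ = Re (u,v)`. -/
def rInner {n : ℕ} (u v : Hn n) : ℝ := (sympProd u v).re

/-- Componentwise right scalar multiplication by a quaternion. -/
def rsmul {n : ℕ} (u : Hn n) (q : ℍ[ℝ]) : Hn n := fun i => u i * q

/-- The 2-form `Ω_a(u,v) = ⟨u·a, v⟩` associated to a quaternion `a`. -/
def OmegaA {n : ℕ} (a : ℍ[ℝ]) (u v : Hn n) : ℝ := rInner (rsmul u a) v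

/-- A real-linear map of `ℍⁿ` is symplectic if it is right `ℍ`-linear and
preserves the symplectic product. -/
def IsSymplectic {n : ℕ} (A : Hn n →ₗ[ℝ] Hn n) : Prop :=
  (∀ u q, A (rsmul u q) = rsmul (A u) q) ∧ ∀ u v, sympProd (A u) (A v) = sympProd u v

lemma rsmul_add {n : ℕ} (u w : Hn n) (q : ℍ[ℝ]) :
    rsmul (u + w) q = rsmul u q + rsmul w q := funext fun i => add_mul _ _ _

lemma rsmul_smulR {n : ℕ} (c : ℝ) (u : Hn n) (q : ℍ[ℝ]) :
    rsmul (c • u) q = c • rsmul u q := by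
  funext i
  simp only [rsmul, Pi.smul_apply]
  exact smul_mul_assoc c (u i) q

lemma re_sum {α : Type*} (s : Finset α) (f : α → ℍ[ℝ]) :
    (∑ x ∈ s, f x).re = ∑ x ∈ s, (f x).re :=
  map_sum (QuaternionAlgebra.reₗ (-1 : ℝ) (0 : ℝ) (-1 : ℝ)) f s

lemma sympProd_add_left {n : ℕ} (u w v : Hn n) :
    sympProd (u + w) v = sympProd u v + sympProd w v := by
  simp [sympProd, add_mul, Finset.sum_add_distrib]

lemma sympProd_smul_left {n : ℕ} (c : ℝ) (u v : Hn n) :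
    sympProd (c • u) v = c • sympProd u v := by
  simp [sympProd, smul_mul_assoc, Finset.smul_sum]

lemma sympProd_add_right {n : ℕ} (u v w : Hn n) :
    sympProd u (v + w) = sympProd u v + sympProd u w := by
  simp [sympProd, mul_add, Finset.sum_add_distrib]

lemma sympProd_smul_right {n : ℕ} (c : ℝ) (u v : Hn n) :
    sympProd u (c • v) = c • sympProd u v := by
  simp [sympProd, mul_smul_comm, Finset.smul_sum]

lemma OmegaA_add_left {n : ℕ} (a : ℍ[ℝ]) (u w v : Hn n) :
    OmegaA a (u + w) v = OmegaA a u v + OmegaA a w v := by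
  simp [OmegaA, rInner, rsmul_add, sympProd_add_left]

lemma OmegaA_smul_left {n : ℕ} (a : ℍ[ℝ]) (c : ℝ) (u v : Hn n) :
    OmegaA a (c • u) v = c • OmegaA a u v := by
  simp [OmegaA, rInner, rsmul_smulR, sympProd_smul_left, Quaternion.re_smul]

lemma OmegaA_add_right {n : ℕ} (a : ℍ[ℝ]) (u v w : Hn n) :
    OmegaA a u (v + w) = OmegaA a u v + OmegaA a u w := by
  simp [OmegaA, rInner, sympProd_add_right]

lemma OmegaA_smul_right {n : ℕ} (a : ℍ[ℝ]) (c : ℝ) (u v : Hn n) :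
    OmegaA a u (c • v) = c • OmegaA a u v := by
  simp [OmegaA, rInner, sympProd_smul_right]

lemma OmegaA_self {n : ℕ} (a : ℍ[ℝ]) (ha : a.re = 0) (u : Hn n) :
    OmegaA a u u = 0 := by
  have : ∀ i, (u i * a * star (u i)).re = 0 := by
    intro i
    simp only [Quaternion.re_mul, Quaternion.imI_mul, Quaternion.imJ_mul, Quaternion.imK_mul,
      Quaternion.re_star, Quaternion.imI_star, Quaternion.imJ_star, Quaternion.imK_star, ha]
    ring
  simp [OmegaA, rInner, rsmul, sympProd, re_sum, this]

/-- `Ω_a` as an alternating 2-form on `ℍⁿ`, for a purely imaginary quaternion `a`. -/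
def omega2 {n : ℕ} (a : ℍ[ℝ]) (ha : a.re = 0) : Hn n [⋀^Fin 2]→ₗ[ℝ] ℝ where
  toFun v := OmegaA a (v 0) (v 1)
  map_update_add' := by
    intro _ m i x y
    fin_cases i <;>
      simp [Function.update, OmegaA_add_left, OmegaA_add_right, Fin.ext_iff]
  map_update_smul' := by
    intro _ m i c x
    fin_cases i <;>
      simp [Function.update, OmegaA_smul_left, OmegaA_smul_right, Fin.ext_iff]
  map_eq_zero_of_eq' := by
    intro v i j hv hij
    have h01 : v 0 = v 1 := by fin_cases i <;> fin_cases j <;> simp_all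
    show OmegaA a (v 0) (v 1) = 0
    rw [h01]
    exact OmegaA_self a ha _
/-- The wedge product of two real-valued alternating forms (the usual shuffle-sum
convention, so that it agrees with the determinant convention on covectors). -/
def wedge {V : Type*} [AddCommGroup V] [Module ℝ V] {p q : ℕ}
    (α : V [⋀^Fin p]→ₗ[ℝ] ℝ) (β : V [⋀^Fin q]→ₗ[ℝ] ℝ) : V [⋀^Fin (p + q)]→ₗ[ℝ] ℝ :=
  ((TensorProduct.lid ℝ ℝ).toLinearMap.compAlternatingMap (α.domCoprod β)).domDomCongr
    finSumFinEquiv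

/-- The quaternion unit `𝐢`. -/
def qI : ℍ[ℝ] := ⟨0, 1, 0, 0⟩
/-- The quaternion unit `𝐣`. -/
def qJ : ℍ[ℝ] := ⟨0, 0, 1, 0⟩
/-- The quaternion unit `𝐤`. -/
def qK : ℍ[ℝ] := ⟨0, 0, 0, 1⟩

/-- The Kraines 4-form `Ω = Ω_𝐢∧Ω_𝐢 + Ω_𝐣∧Ω_𝐣 + Ω_𝐤∧Ω_𝐤` on `ℍⁿ`. -/
def Kraines (n : ℕ) : Hn n [⋀^Fin 4]→ₗ[ℝ] ℝ :=
  wedge (omega2 qI rfl) (omega2 qI rfl) + wedge (omega2 qJ rfl) (omega2 qJ rfl) +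
    wedge (omega2 qK rfl) (omega2 qK rfl)

lemma wedge_compLinearMap {V W : Type*} [AddCommGroup V] [Module ℝ V] [AddCommGroup W] [Module ℝ W]
    {p q : ℕ} (α : V [⋀^Fin p]→ₗ[ℝ] ℝ) (β : V [⋀^Fin q]→ₗ[ℝ] ℝ) (f : W →ₗ[ℝ] V) :
    (wedge α β).compLinearMap f = wedge (α.compLinearMap f) (β.compLinearMap f) := by
  ext u
  show (wedge α β) (fun i => f (u i)) = _
  unfold wedge
  simp only [AlternatingMap.domDomCongr_apply, LinearMap.compAlternatingMap_apply,
    AlternatingMap.compLinearMap_apply]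
  congr 1
  have h1 : (α.domCoprod β) ((fun i => f (u i)) ∘ finSumFinEquiv) =
      (∑ σ : Equiv.Perm.ModSumCongr (Fin p) (Fin q),
        AlternatingMap.domCoprod.summand α β σ) ((fun i => f (u i)) ∘ finSumFinEquiv) := by
    rw [← AlternatingMap.domCoprod_coe]; rfl
  have h2 : ((α.compLinearMap f).domCoprod (β.compLinearMap f)) (u ∘ finSumFinEquiv) =
      (∑ σ : Equiv.Perm.ModSumCongr (Fin p) (Fin q),
        AlternatingMap.domCoprod.summand (α.compLinearMap f) (β.compLinearMap f) σ)
        (u ∘ finSumFinEquiv) := by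
    rw [← AlternatingMap.domCoprod_coe]; rfl
  rw [h1, h2, MultilinearMap.sum_apply, MultilinearMap.sum_apply]
  apply Finset.sum_congr rfl
  intro σ _
  induction σ using Quotient.inductionOn' with
  | h σ =>
    rw [AlternatingMap.domCoprod.summand_mk'', AlternatingMap.domCoprod.summand_mk'']
    simp [MultilinearMap.domDomCongr_apply, MultilinearMap.domCoprod_apply,
      AlternatingMap.compLinearMap_apply, Function.comp]

lemma wedge_add_left {V : Type*} [AddCommGroup V] [Module ℝ V] {p q : ℕ}
    (α α' : V [⋀^Fin p]→ₗ[ℝ] ℝ) (β : V [⋀^Fin q]→ₗ[ℝ] ℝ) :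
    wedge (α + α') β = wedge α β + wedge α' β := by
  unfold wedge
  rw [← AlternatingMap.domCoprod'_apply, TensorProduct.add_tmul, map_add,
    AlternatingMap.domCoprod'_apply, AlternatingMap.domCoprod'_apply,
    LinearMap.compAlternatingMap_add, AlternatingMap.domDomCongr_add]

lemma wedge_smul_left {V : Type*} [AddCommGroup V] [Module ℝ V] {p q : ℕ}
    (c : ℝ) (α : V [⋀^Fin p]→ₗ[ℝ] ℝ) (β : V [⋀^Fin q]→ₗ[ℝ] ℝ) :
    wedge (c • α) β = c • wedge α β := by
  unfold wedge
  rw [← AlternatingMap.domCoprod'_apply, ← TensorProduct.smul_tmul', map_smul,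
    AlternatingMap.domCoprod'_apply, LinearMap.compAlternatingMap_smul,
    AlternatingMap.domDomCongr_smul]

lemma wedge_add_right {V : Type*} [AddCommGroup V] [Module ℝ V] {p q : ℕ}
    (α : V [⋀^Fin p]→ₗ[ℝ] ℝ) (β β' : V [⋀^Fin q]→ₗ[ℝ] ℝ) :
    wedge α (β + β') = wedge α β + wedge α β' := by
  unfold wedge
  rw [← AlternatingMap.domCoprod'_apply, TensorProduct.tmul_add, map_add,
    AlternatingMap.domCoprod'_apply, AlternatingMap.domCoprod'_apply,
    LinearMap.compAlternatingMap_add, AlternatingMap.domDomCongr_add]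

lemma wedge_smul_right {V : Type*} [AddCommGroup V] [Module ℝ V] {p q : ℕ}
    (c : ℝ) (α : V [⋀^Fin p]→ₗ[ℝ] ℝ) (β : V [⋀^Fin q]→ₗ[ℝ] ℝ) :
    wedge α (c • β) = c • wedge α β := by
  unfold wedge
  rw [← AlternatingMap.domCoprod'_apply, TensorProduct.tmul_smul, map_smul,
    AlternatingMap.domCoprod'_apply, LinearMap.compAlternatingMap_smul,
    AlternatingMap.domDomCongr_smul]

lemma omega2_apply {n : ℕ} (a : ℍ[ℝ]) (ha : a.re = 0) (v : Fin 2 → Hn n) :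
    omega2 a ha v = OmegaA a (v 0) (v 1) := rfl

/-- Right multiplication by `q` as a real-linear map. -/
def rmulR {n : ℕ} (q : ℍ[ℝ]) : Hn n →ₗ[ℝ] Hn n where
  toFun u := rsmul u q
  map_add' u w := rsmul_add u w q
  map_smul' c u := rsmul_smulR c u q

lemma OmegaA_conj {n : ℕ} (a q : ℍ[ℝ]) (u v : Hn n) :
    OmegaA a (rsmul u q) (rsmul v q) = OmegaA (q * a * star q) u v := by
  unfold OmegaA rInner sympProd rsmul
  congr 1
  apply Finset.sum_congr rfl
  intro i _
  simp [StarMul.star_mul, mul_assoc]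
  rfl

lemma OmegaA_a_add {n : ℕ} (a b : ℍ[ℝ]) (u v : Hn n) :
    OmegaA (a + b) u v = OmegaA a u v + OmegaA b u v := by
  simp [OmegaA, rInner, rsmul, sympProd, mul_add, add_mul, Finset.sum_add_distrib]

lemma OmegaA_a_smul {n : ℕ} (c : ℝ) (a : ℍ[ℝ]) (u v : Hn n) :
    OmegaA (c • a) u v = c * OmegaA a u v := by
  simp [OmegaA, rInner, rsmul, sympProd, mul_smul_comm, smul_mul_assoc, re_sum,
    Quaternion.re_smul, Finset.mul_sum]

lemma omega2_decomp {n : ℕ} (b : ℍ[ℝ]) (hb : b.re = 0) :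
    (omega2 b hb : Hn n [⋀^Fin 2]→ₗ[ℝ] ℝ) =
      b.imI • omega2 qI rfl + b.imJ • omega2 qJ rfl + b.imK • omega2 qK rfl := by
  ext v
  have hbe : b = b.imI • qI + b.imJ • qJ + b.imK • qK := by
    ext <;> simp [hb, Quaternion.re_smul] <;> simp [qI, qJ, qK]
  simp only [omega2_apply, AlternatingMap.add_apply, AlternatingMap.smul_apply, smul_eq_mul]
  conv_lhs => rw [hbe]
  rw [OmegaA_a_add, OmegaA_a_add, OmegaA_a_smul, OmegaA_a_smul, OmegaA_a_smul]
  rfl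

lemma omega2_comp_rmul {n : ℕ} (a : ℍ[ℝ]) (ha : a.re = 0) (q : ℍ[ℝ])
    (hb : (q * a * star q).re = 0) :
    (omega2 a ha).compLinearMap (rmulR (n := n) q) = omega2 (q * a * star q) hb := by
  ext v
  simp only [AlternatingMap.compLinearMap_apply, omega2_apply, rmulR, LinearMap.coe_mk,
    AddHom.coe_mk]
  exact OmegaA_conj a q (v 0) (v 1)

lemma omega2_comp_symp {n : ℕ} (a : ℍ[ℝ]) (ha : a.re = 0) (A : Hn n →ₗ[ℝ] Hn n)
    (hA : IsSymplectic A) :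
    (omega2 a ha).compLinearMap A = omega2 a ha := by
  ext v
  simp only [AlternatingMap.compLinearMap_apply, omega2_apply]
  show OmegaA a (A (v 0)) (A (v 1)) = OmegaA a (v 0) (v 1)
  unfold OmegaA rInner
  rw [← hA.1, hA.2]

lemma key_rmul {n : ℕ} (q : ℍ[ℝ]) (hq : ‖q‖ = 1)
    (hb : ∀ a : ℍ[ℝ], a.re = 0 → (q * a * star q).re = 0) :
    (Kraines n).compLinearMap (rmulR q) = Kraines n := by
  have hnq : q.re ^ 2 + q.imI ^ 2 + q.imJ ^ 2 + q.imK ^ 2 = 1 := by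
    rw [← Quaternion.normSq_def', Quaternion.normSq_eq_norm_mul_self, hq]; norm_num
  unfold Kraines
  rw [AlternatingMap.add_compLinearMap, AlternatingMap.add_compLinearMap,
    wedge_compLinearMap, wedge_compLinearMap, wedge_compLinearMap,
    omega2_comp_rmul qI rfl q (hb qI rfl), omega2_comp_rmul qJ rfl q (hb qJ rfl),
    omega2_comp_rmul qK rfl q (hb qK rfl),
    omega2_decomp _ (hb qI rfl), omega2_decomp _ (hb qJ rfl), omega2_decomp _ (hb qK rfl)]
  simp only [wedge_add_left, wedge_add_right, wedge_smul_left, wedge_smul_right,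
    Quaternion.imI_mul, Quaternion.imJ_mul, Quaternion.imK_mul, Quaternion.re_mul,
    Quaternion.re_star, Quaternion.imI_star, Quaternion.imJ_star, Quaternion.imK_star]
  simp only [qI, qJ, qK]
  match_scalars
  all_goals
    first
      | ring1
      | linear_combination (q.re ^ 2 + q.imI ^ 2 + q.imJ ^ 2 + q.imK ^ 2 + 1) * hnq

lemma key_symp {n : ℕ} (A : Hn n →ₗ[ℝ] Hn n) (hA : IsSymplectic A) :
    (Kraines n).compLinearMap A = Kraines n := by
  unfold Kraines
  rw [AlternatingMap.add_compLinearMap, AlternatingMap.add_compLinearMap,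
    wedge_compLinearMap, wedge_compLinearMap, wedge_compLinearMap,
    omega2_comp_symp qI rfl A hA, omega2_comp_symp qJ rfl A hA, omega2_comp_symp qK rfl A hA]

theorem statement5 (n : ℕ) (hn : 1 ≤ n) (A : Hn n →ₗ[ℝ] Hn n) (hA : IsSymplectic A)
    (q : ℍ[ℝ]) (hq : ‖q‖ = 1) (u : Fin 4 → Hn n) :
    Kraines n (fun s => rsmul (A (u s)) q) = Kraines n u := by
  have hb : ∀ a : ℍ[ℝ], a.re = 0 → (q * a * star q).re = 0 := by
    intro a ha
    simp only [Quaternion.re_mul, Quaternion.imI_mul, Quaternion.imJ_mul, Quaternion.imK_mul,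
      Quaternion.re_star, Quaternion.imI_star, Quaternion.imJ_star, Quaternion.imK_star, ha]
    ring
  calc Kraines n (fun s => rsmul (A (u s)) q)
      = ((Kraines n).compLinearMap (rmulR q)).compLinearMap A u := rfl
    _ = Kraines n u := by rw [key_rmul q hq hb, key_symp A hA]
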